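/- Let (U_i)_{i≥1} be an exchangeable sequence of [0,1]-valued random variables, set U₀ := 0, and let Π be an exchangeable random distinguished partition of ℤ₊ independent of (U_i)_{i≥1}. Then the sequence (U_{α_Π(k)})_{k≥1} is exchangeable: for every permutation τ of {1,2,…} with finite support, (U_{α_Π(τ(k))})_{k≥1} has the same law as (U_{α_Π(k)})_{k≥1}. -/

import Mathlib

open MeasureTheory

/-- `b : ℕ → Set ℕ` is (the block function of) a distinguished partition of ℤ₊ = ℕ:
the blocks are pairwise disjoint, cover ℕ, and are indexed in increasing order of their
least element (empty blocks being assigned to the remaining indices, after all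
nonempty ones). -/
def IsDistPartition (b : ℕ → Set ℕ) : Prop :=
  (∀ i j, i ≠ j → Disjoint (b i) (b j)) ∧
  (∀ k, ∃ i, k ∈ b i) ∧
  (∀ i j, i < j → (b j).Nonempty → (b i).Nonempty ∧ sInf (b i) < sInf (b j))

/-- `α_π(k)`: the index of the block of `π` containing `k`. -/
noncomputable def blockIndex (b : ℕ → Set ℕ) (k : ℕ) : ℕ := sInf {i | k ∈ b i}

/-- `A : ℕ → ℕ` is the index map `α_π` of some distinguished partition `π` of ℤ₊. -/
def IsDistIndexMap (A : ℕ → ℕ) : Prop :=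
  ∃ b : ℕ → Set ℕ, IsDistPartition b ∧ ∀ k, A k = blockIndex b k

/-! ### first occurrence and normalization -/

noncomputable def firstOcc (c : ℕ → ℕ) (k : ℕ) : ℕ :=
  Nat.find (show ∃ j, c j = c k from ⟨k, rfl⟩)

noncomputable def normal (c : ℕ → ℕ) (k : ℕ) : ℕ :=
  ((Finset.range (firstOcc c k)).image c).card

lemma firstOcc_app (c : ℕ → ℕ) (k : ℕ) : c (firstOcc c k) = c k :=
  Nat.find_spec (show ∃ j, c j = c k from ⟨k, rfl⟩)

lemma firstOcc_le (c : ℕ → ℕ) (k : ℕ) : firstOcc c k ≤ k :=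
  Nat.find_le rfl

lemma firstOcc_min (c : ℕ → ℕ) {k j : ℕ} (h : j < firstOcc c k) : c j ≠ c k :=
  Nat.find_min (show ∃ j, c j = c k from ⟨k, rfl⟩) h

lemma firstOcc_congr {c : ℕ → ℕ} {i j : ℕ} (h : c i = c j) : firstOcc c i = firstOcc c j := by
  unfold firstOcc
  congr 1
  · simp [h]

lemma firstOcc_eq_self_iff {c : ℕ → ℕ} {k : ℕ} (h : ∀ j < k, c j ≠ c k) :
    firstOcc c k = k :=
  le_antisymm (firstOcc_le c k)
    (le_of_not_gt fun hlt => h _ hlt (firstOcc_app c k) |>.elim)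

lemma normal_congr {c : ℕ → ℕ} {i j : ℕ} (h : c i = c j) : normal c i = normal c j := by
  unfold normal; rw [firstOcc_congr h]

lemma normal_eq_iff (c : ℕ → ℕ) (i j : ℕ) : normal c i = normal c j ↔ c i = c j := by
  constructor
  · intro h
    by_contra hne
    -- wlog firstOcc c i < firstOcc c j
    rcases lt_trichotomy (firstOcc c i) (firstOcc c j) with hlt | heq | hlt
    · have hsub : (Finset.range (firstOcc c i)).image c ⊆
          (Finset.range (firstOcc c j)).image c :=
        Finset.image_subset_image (by simp [Finset.range_subset, le_of_lt hlt]; intro x hx; omega)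
      have hmem : c i ∈ (Finset.range (firstOcc c j)).image c :=
        Finset.mem_image.2 ⟨firstOcc c i, by simp [hlt], firstOcc_app c i⟩
      have hnmem : c i ∉ (Finset.range (firstOcc c i)).image c := by
        intro hc
        rcases Finset.mem_image.1 hc with ⟨j', hj', hcj⟩
        exact firstOcc_min c (Finset.mem_range.1 hj') hcj
      have : ((Finset.range (firstOcc c i)).image c).card <
          ((Finset.range (firstOcc c j)).image c).card :=
        Finset.card_lt_card (Finset.ssubset_iff_of_subset hsub |>.2 ⟨c i, hmem, hnmem⟩)
      exact absurd h (ne_of_lt this)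
    · exact hne (by rw [← firstOcc_app c i, ← firstOcc_app c j, heq])
    · have hsub : (Finset.range (firstOcc c j)).image c ⊆
          (Finset.range (firstOcc c i)).image c :=
        Finset.image_subset_image (by simp [Finset.range_subset, le_of_lt hlt]; intro x hx; omega)
      have hmem : c j ∈ (Finset.range (firstOcc c i)).image c :=
        Finset.mem_image.2 ⟨firstOcc c j, by simp [hlt], firstOcc_app c j⟩
      have hnmem : c j ∉ (Finset.range (firstOcc c j)).image c := by
        intro hc
        rcases Finset.mem_image.1 hc with ⟨j', hj', hcj⟩
        exact firstOcc_min c (Finset.mem_range.1 hj') hcj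
      have : ((Finset.range (firstOcc c j)).image c).card <
          ((Finset.range (firstOcc c i)).image c).card :=
        Finset.card_lt_card (Finset.ssubset_iff_of_subset hsub |>.2 ⟨c j, hmem, hnmem⟩)
      exact absurd h.symm (ne_of_lt this)
  · exact normal_congr

lemma normal_zero (c : ℕ → ℕ) : normal c 0 = 0 := by
  have h0 : firstOcc c 0 = 0 := Nat.le_zero.1 (firstOcc_le c 0)
  simp [normal, h0]

lemma normal_of_firstOcc_self {c : ℕ → ℕ} {s : ℕ} (h : firstOcc c s = s) :
    normal c s = ((Finset.range s).image c).card := by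
  rw [normal, h]

/-- if some value's first occurrence count is past i, there is an earlier new value
with count i -/
lemma aux_lower (c : ℕ → ℕ) : ∀ t, ∀ i, i < ((Finset.range t).image c).card →
    ∃ s < t, firstOcc c s = s ∧ ((Finset.range s).image c).card = i := by
  intro t
  induction t with
  | zero => simp
  | succ t ih =>
    intro i hi
    by_cases hc : c t ∈ (Finset.range t).image c
    · have himg : (Finset.range (t+1)).image c = (Finset.range t).image c := by
        rw [Finset.range_add_one, Finset.image_insert, Finset.insert_eq_self.2 hc]
      rw [himg] at hi
      obtain ⟨s, hs, h1, h2⟩ := ih i hi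
      exact ⟨s, Nat.lt_succ_of_lt hs, h1, h2⟩
    · have himg : (Finset.range (t+1)).image c = insert (c t) ((Finset.range t).image c) := by
        rw [Finset.range_add_one, Finset.image_insert]
      rw [himg, Finset.card_insert_of_notMem hc] at hi
      rcases Nat.lt_succ_iff_lt_or_eq.1 hi with hlt | heq
      · obtain ⟨s, hs, h1, h2⟩ := ih i hlt
        exact ⟨s, Nat.lt_succ_of_lt hs, h1, h2⟩
      · refine ⟨t, Nat.lt_succ_self t, ?_, heq.symm⟩
        exact firstOcc_eq_self_iff fun j hj hcj =>
          hc (Finset.mem_image.2 ⟨j, Finset.mem_range.2 hj, hcj⟩)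

lemma normal_lower {c : ℕ → ℕ} {k i : ℕ} (hi : i < normal c k) :
    ∃ s < firstOcc c k, firstOcc c s = s ∧ normal c s = i := by
  obtain ⟨s, hs, h1, h2⟩ := aux_lower c (firstOcc c k) i hi
  exact ⟨s, hs, h1, by rw [normal_of_firstOcc_self h1, h2]⟩

/-! ### normal c is a distinguished index map -/

lemma fiber_sInf {c : ℕ → ℕ} (k : ℕ) :
    sInf {k' | normal c k' = normal c k} = firstOcc c k := by
  have hmem : firstOcc c k ∈ {k' | normal c k' = normal c k} :=
    normal_congr (firstOcc_app c k)
  apply le_antisymm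
  · exact Nat.sInf_le hmem
  · apply le_csInf ⟨_, hmem⟩
    intro x hx
    have hcx : c x = c k := (normal_eq_iff c x k).1 hx
    calc firstOcc c k = firstOcc c x := (firstOcc_congr hcx).symm
      _ ≤ x := firstOcc_le c x

lemma normal_isDistIndexMap (c : ℕ → ℕ) : IsDistIndexMap (normal c) := by
  refine ⟨fun i => {k | normal c k = i}, ⟨?_, ?_, ?_⟩, ?_⟩
  · intro i j hij
    rw [Set.disjoint_left]
    rintro k (hk : normal c k = i) (hk' : normal c k = j)
    exact hij (hk ▸ hk' ▸ rfl)
  · exact fun k => ⟨normal c k, rfl⟩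
  · rintro i j hij ⟨k, (hk : normal c k = j)⟩
    subst hk
    obtain ⟨s, hs, hfs, hns⟩ := normal_lower hij
    constructor
    · exact ⟨s, hns⟩
    · have h1 : sInf {k' | normal c k' = normal c s} = firstOcc c s := fiber_sInf s
      have h2 : sInf {k' | normal c k' = normal c k} = firstOcc c k := fiber_sInf k
      rw [hns] at h1
      rw [h1, h2, hfs]
      exact hs
  · intro k
    have : {i | k ∈ {k' | normal c k' = i}} = {normal c k} := by
      ext i; simp [eq_comm, Set.mem_setOf_eq]
    rw [blockIndex, this, csInf_singleton]

/-! ### a distinguished index map is its own normalization -/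

lemma isDistIndexMap_normal {a : ℕ → ℕ} (h : IsDistIndexMap a) : ∀ k, normal a k = a k := by
  obtain ⟨b, ⟨hdisj, hcov, hord⟩, hab⟩ := h
  have f1 : ∀ k, k ∈ b (a k) := by
    intro k
    rw [hab k, blockIndex]
    exact Nat.sInf_mem (hcov k)
  have f2 : ∀ k i, k ∈ b i → a k = i := by
    intro k i hk
    by_contra hne
    exact Set.disjoint_left.1 (hdisj _ _ (Ne.symm hne)) hk (f1 k)
  intro k
  set t := sInf (b (a k)) with ht
  have htmem : t ∈ b (a k) := Nat.sInf_mem ⟨k, f1 k⟩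
  have hat : a t = a k := f2 t (a k) htmem
  have hfo : firstOcc a k = t := by
    have h1 : firstOcc a k = firstOcc a t := (firstOcc_congr hat).symm
    rw [h1]
    apply firstOcc_eq_self_iff
    intro j hj hja
    have hjk : a j = a k := hja.trans hat
    have : j ∈ b (a k) := hjk ▸ f1 j
    exact absurd (Nat.sInf_le this) (not_le.2 hj)
  have himg : (Finset.range t).image a = Finset.range (a k) := by
    apply Finset.ext
    intro v
    simp only [Finset.mem_image, Finset.mem_range]
    constructor
    · rintro ⟨j, hj, rfl⟩
      -- a j < a k
      by_contra hge
      push_neg at hge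
      rcases eq_or_lt_of_le hge with heq | hlt
      · have : j ∈ b (a k) := heq ▸ f1 j
        exact absurd (Nat.sInf_le this) (not_le.2 hj)
      · have := hord (a k) (a j) hlt ⟨j, f1 j⟩
        have h3 : sInf (b (a j)) ≤ j := Nat.sInf_le (f1 j)
        omega
    · intro hv
      obtain ⟨hne, hlt⟩ := hord v (a k) hv ⟨k, f1 k⟩
      refine ⟨sInf (b v), hlt, f2 _ _ (Nat.sInf_mem hne)⟩
  rw [normal, hfo, himg, Finset.card_range]

/-- monotonicity of first occurrences for a normalized map -/
lemma firstOcc_mono {a : ℕ → ℕ} (han : ∀ k, normal a k = a k) {k1 k2 : ℕ}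
    (h : a k1 ≤ a k2) : firstOcc a k1 ≤ firstOcc a k2 := by
  rcases eq_or_lt_of_le h with heq | hlt
  · exact le_of_eq (firstOcc_congr heq)
  · rw [← han k2] at hlt
    obtain ⟨s, hs, hfs, hns⟩ := normal_lower hlt
    have : a s = a k1 := by rw [← han s]; exact hns
    calc firstOcc a k1 = firstOcc a s := firstOcc_congr this.symm
      _ = s := hfs
      _ ≤ firstOcc a k2 := le_of_lt hs

/-- The key combinatorial lemma: for a normalized index map `a` and a finitely
supported permutation `τ` of ℕ fixing 0, there is a finitely supported permutation
`ρ` of ℕ fixing 0 such that `ρ (normal (a ∘ τ) k) = a (τ k)` for all `k`. -/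
lemma exists_perm_normal_comp {a : ℕ → ℕ} (han : ∀ k, normal a k = a k)
    (τ : Equiv.Perm ℕ) (hτfin : {x | τ x ≠ x}.Finite) (hτ0 : τ 0 = 0) :
    ∃ ρ : Equiv.Perm ℕ, {x | ρ x ≠ x}.Finite ∧ ρ 0 = 0 ∧
      ∀ k, ρ (normal (fun j => a (τ j)) k) = a (τ k) := by
  classical
  set c : ℕ → ℕ := fun j => a (τ j) with hc
  set K : ℕ := hτfin.toFinset.sup id + 1 with hK
  have hτfix : ∀ x, K ≤ x → τ x = x := by
    intro x hx
    by_contra hne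
    have : x ∈ hτfin.toFinset := hτfin.mem_toFinset.2 hne
    have h2 : x ≤ hτfin.toFinset.sup id := Finset.le_sup (f := id) this
    omega
  set M : ℕ := (Finset.range K).sup a with hM
  have hMa : ∀ j, j < K → a j ≤ M := fun j hj =>
    Finset.le_sup (Finset.mem_range.2 hj)
  -- step 1 : big values are fixed by τ
  have S1 : ∀ k, M < c k → τ k = k ∧ K ≤ k := by
    intro k hk
    have h1 : K ≤ τ k := by
      by_contra h
      exact absurd (hMa (τ k) (not_le.1 h)) (not_le.2 hk)
    have h2 : τ (τ k) = τ k := hτfix _ h1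
    have h3 : τ k = k := τ.injective h2
    exact ⟨h3, h3 ▸ h1⟩
  have S1a : ∀ j, M < a j → j = τ j ∧ K ≤ j := by
    intro j hj
    have h1 : K ≤ j := by
      by_contra h
      exact absurd (hMa j (not_le.1 h)) (not_le.2 hj)
    exact ⟨(hτfix j h1).symm, h1⟩
  -- τ permutes any initial segment [0,t) with K ≤ t
  have himgτ : ∀ t, K ≤ t → (Finset.range t).image τ = Finset.range t := by
    intro t ht
    apply Finset.eq_of_subset_of_card_le
    · intro x hx
      rcases Finset.mem_image.1 hx with ⟨j, hj, rfl⟩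
      rw [Finset.mem_range] at hj ⊢
      rcases lt_or_ge (τ j) K with h | h
      · omega
      · have h2 : τ j = j := τ.injective (hτfix _ h)
        omega
    · rw [Finset.card_image_of_injective _ τ.injective]
  have himgc : ∀ t, K ≤ t → (Finset.range t).image c = (Finset.range t).image a := by
    intro t ht
    have : (Finset.range t).image c = ((Finset.range t).image τ).image a := by
      rw [Finset.image_image]; rfl
    rw [this, himgτ t ht]
  -- P : big values are their own normalization
  have P : ∀ k, M < c k → normal c k = c k := by
    intro k hk
    set t := firstOcc c k with htdef
    have hct : c t = c k := firstOcc_app c k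
    have hctM : M < c t := hct ▸ hk
    obtain ⟨hτt, hKt⟩ := S1 t hctM
    have hat : a t = c k := by
      rw [← hct]
      show a t = a (τ t)
      rw [hτt]
    have hfoat : firstOcc a t = t := by
      apply firstOcc_eq_self_iff
      intro j hj hja
      have hjM : M < a j := by rw [hja, hat]; exact hk
      obtain ⟨hjτ, hKj⟩ := S1a j hjM
      have hcj : c j = c k := by
        show a (τ j) = c k; rw [← hjτ, hja, hat]
      exact firstOcc_min c (htdef ▸ hj) hcj
    calc normal c k = ((Finset.range t).image c).card := rfl
      _ = ((Finset.range t).image a).card := by rw [himgc t hKt]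
      _ = normal a t := by rw [normal_of_firstOcc_self hfoat]
      _ = a t := han t
      _ = c k := hat
  -- Q : small values have small normalization
  have hKpos : 0 < K := by omega
  obtain ⟨j₀, hj₀mem, hj₀⟩ := Finset.exists_mem_eq_sup (Finset.range K)
    ⟨0, Finset.mem_range.2 hKpos⟩ a
  rw [Finset.mem_range] at hj₀mem
  have Q : ∀ k, c k ≤ M → normal c k ≤ M := by
    intro k hk
    -- first occurrence of the value a (τ k) in a is < K
    have hfa : firstOcc a (τ k) < K := by
      have h1 : firstOcc a (τ k) ≤ firstOcc a j₀ :=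
        firstOcc_mono han (by rw [← hj₀]; exact hk)
      have h2 : firstOcc a j₀ ≤ j₀ := firstOcc_le a j₀
      omega
    set s := firstOcc a (τ k) with hs
    have hj' : τ.symm s < K := by
      by_contra h
      have h2 := hτfix _ (not_lt.1 h)
      have h3 : τ (τ.symm s) = s := τ.apply_symm_apply s
      have h4 : τ.symm s = s := h2.symm.trans h3
      omega
    have hcj' : c (τ.symm s) = c k := by
      show a (τ (τ.symm s)) = a (τ k)
      rw [Equiv.apply_symm_apply]
      exact firstOcc_app a (τ k)
    have hfoc : firstOcc c k < K := by
      have h1 : firstOcc c k = firstOcc c (τ.symm s) := firstOcc_congr hcj'.symm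
      have h2 : firstOcc c (τ.symm s) ≤ τ.symm s := firstOcc_le c (τ.symm s)
      omega
    have hsub : (Finset.range (firstOcc c k)).image c ⊆
        (Finset.range (M+1)).erase (c k) := by
      intro v hv
      rcases Finset.mem_image.1 hv with ⟨j, hj, rfl⟩
      rw [Finset.mem_range] at hj
      have hjK : j < K := by omega
      have hvmem : c j ∈ (Finset.range K).image c :=
        Finset.mem_image.2 ⟨j, Finset.mem_range.2 hjK, rfl⟩
      rw [himgc K le_rfl] at hvmem
      rcases Finset.mem_image.1 hvmem with ⟨j', hj'2, hj'3⟩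
      rw [Finset.mem_range] at hj'2
      refine Finset.mem_erase.2 ⟨firstOcc_min c hj, ?_⟩
      rw [Finset.mem_range]
      have := hMa j' hj'2
      omega
    calc normal c k = ((Finset.range (firstOcc c k)).image c).card := rfl
      _ ≤ ((Finset.range (M+1)).erase (c k)).card := Finset.card_le_card hsub
      _ = M := by
            rw [Finset.card_erase_of_mem (Finset.mem_range.2 (by omega)),
              Finset.card_range]
            omega
  -- contrapositive of Q
  have Q' : ∀ k, M < normal c k → M < c k := by
    intro k hk
    by_contra h
    exact absurd (Q k (not_lt.1 h)) (not_le.2 hk)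
  -- lower range of c
  have LOW1 : ∀ k v, v ≤ c k → ∃ k', c k' = v := by
    intro k v hv
    rcases eq_or_lt_of_le hv with heq | hlt
    · exact ⟨k, heq.symm⟩
    · have : v < normal a (τ k) := by rw [han]; exact hlt
      obtain ⟨s, _, _, hns⟩ := normal_lower this
      refine ⟨τ.symm s, ?_⟩
      show a (τ (τ.symm s)) = v
      rw [Equiv.apply_symm_apply, ← han s, hns]
  have LOW2 : ∀ k v, v ≤ normal c k → ∃ k', normal c k' = v := by
    intro k v hv
    rcases eq_or_lt_of_le hv with heq | hlt
    · exact ⟨k, heq.symm⟩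
    · obtain ⟨s, _, _, hns⟩ := normal_lower hlt
      exact ⟨s, hns⟩
  -- range of normal c ⊆ range of c
  have R1 : ∀ k, ∃ k', c k' = normal c k := by
    intro k
    by_contra hcontra
    push_neg at hcontra
    set v := normal c k with hv
    -- all values of c are < v
    have hall : ∀ k', c k' < v := by
      intro k'
      rcases lt_or_ge (c k') v with h | h
      · exact h
      · obtain ⟨k'', hk''⟩ := LOW1 k' v h
        exact absurd hk'' (hcontra k'')
    have hins : insert (c k) ((Finset.range (firstOcc c k)).image c) ⊆ Finset.range v := by
      intro x hx
      rcases Finset.mem_insert.1 hx with rfl | hx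
      · exact Finset.mem_range.2 (hall k)
      · rcases Finset.mem_image.1 hx with ⟨j, _, rfl⟩
        exact Finset.mem_range.2 (hall j)
    have hnotmem : c k ∉ (Finset.range (firstOcc c k)).image c := by
      intro hmem
      rcases Finset.mem_image.1 hmem with ⟨j, hj, hcj⟩
      exact firstOcc_min c (Finset.mem_range.1 hj) hcj
    have hcard := Finset.card_le_card hins
    rw [Finset.card_insert_of_notMem hnotmem, Finset.card_range] at hcard
    have : ((Finset.range (firstOcc c k)).image c).card = v := rfl
    omega
  -- range of c ⊆ range of normal c
  have R2 : ∀ k, ∃ k', normal c k' = c k := by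
    intro k
    by_contra hcontra
    push_neg at hcontra
    set v := c k with hv
    have hall : ∀ k', normal c k' < v := by
      intro k'
      rcases lt_or_ge (normal c k') v with h | h
      · exact h
      · obtain ⟨k'', hk''⟩ := LOW2 k' v h
        exact absurd hk'' (hcontra k'')
    -- the v+1 values 0,…,v are all values of c, with distinct normalizations < v
    set F : ℕ → ℕ := fun w => if h : ∃ k', c k' = w then normal c h.choose else 0 with hF
    have hFval : ∀ w ≤ v, ∃ kw, c kw = w ∧ F w = normal c kw := by
      intro w hw
      have hex : ∃ k', c k' = w := LOW1 k w hw
      exact ⟨hex.choose, hex.choose_spec, dif_pos hex⟩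
    have hinj : Set.InjOn F (Finset.range (v+1)) := by
      intro w hw w' hw' hww
      rw [Finset.coe_range, Set.mem_Iio] at hw hw'
      obtain ⟨kw, hkw, hFw⟩ := hFval w (by omega)
      obtain ⟨kw', hkw', hFw'⟩ := hFval w' (by omega)
      rw [hFw, hFw'] at hww
      have := (normal_eq_iff c kw kw').1 hww
      rw [hkw, hkw'] at this
      exact this
    have hmaps : ∀ w ∈ Finset.range (v+1), F w ∈ Finset.range v := by
      intro w hw
      rw [Finset.mem_range] at hw
      obtain ⟨kw, _, hFw⟩ := hFval w (by omega)
      rw [hFw]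
      exact Finset.mem_range.2 (hall kw)
    have := Finset.card_le_card_of_injOn F hmaps hinj
    simp only [Finset.card_range] at this
    omega
  -- the permutation
  set f : ℕ → ℕ := fun i => if h : ∃ k, normal c k = i then c h.choose else i with hf
  have hfnorm : ∀ k, f (normal c k) = c k := by
    intro k
    have hex : ∃ k', normal c k' = normal c k := ⟨k, rfl⟩
    have : f (normal c k) = c hex.choose := dif_pos hex
    rw [this]
    exact (normal_eq_iff c hex.choose k).1 hex.choose_spec
  have hfbig : ∀ i, M < i → f i = i := by
    intro i hi
    by_cases h : ∃ k, normal c k = i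
    · have h1 : f i = c h.choose := dif_pos h
      have h2 : normal c h.choose = i := h.choose_spec
      have h3 : M < c h.choose := Q' _ (by rw [h2]; exact hi)
      rw [h1]
      exact (P _ h3).symm.trans h2
    · exact dif_neg h
  have hfsmall : ∀ i, i ≤ M → f i ≤ M := by
    intro i hi
    by_cases h : ∃ k, normal c k = i
    · have h1 : f i = c h.choose := dif_pos h
      have h2 : normal c h.choose = i := h.choose_spec
      rw [h1]
      by_contra hbig
      have := P _ (not_le.1 hbig)
      omega
    · have h1 : f i = i := dif_neg h
      rw [h1]; exact hi
  have hfinj : Function.Injective f := by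
    intro i i' hii
    by_cases h : ∃ k, normal c k = i <;> by_cases h' : ∃ k, normal c k = i'
    · have h1 : f i = c h.choose := dif_pos h
      have h1' : f i' = c h'.choose := dif_pos h'
      rw [h1, h1'] at hii
      have := normal_congr hii
      rw [h.choose_spec, h'.choose_spec] at this
      exact this
    · exfalso
      have h1 : f i = c h.choose := dif_pos h
      have h1' : f i' = i' := dif_neg h'
      rw [h1, h1'] at hii
      obtain ⟨k', hk'⟩ := R2 h.choose
      exact h' ⟨k', by rw [hk', hii]⟩
    · exfalso
      have h1 : f i = i := dif_neg h
      have h1' : f i' = c h'.choose := dif_pos h'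
      rw [h1, h1'] at hii
      obtain ⟨k', hk'⟩ := R2 h'.choose
      exact h ⟨k', by rw [hk', ← hii]⟩
    · have h1 : f i = i := dif_neg h
      have h1' : f i' = i' := dif_neg h'
      rw [h1, h1'] at hii
      exact hii
  have hfsurj : Function.Surjective f := by
    intro v
    rcases le_or_gt v M with hv | hv
    · have hsurj := Finset.surj_on_of_inj_on_of_card_le
        (s := Finset.range (M+1)) (t := Finset.range (M+1))
        (fun a _ => f a)
        (fun a ha => Finset.mem_range.2
          (Nat.lt_succ_of_le (hfsmall a (Nat.lt_succ_iff.1 (Finset.mem_range.1 ha)))))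
        (fun a₁ a₂ _ _ h => hfinj h) le_rfl
      obtain ⟨a', _, ha'⟩ := hsurj v (Finset.mem_range.2 (Nat.lt_succ_of_le hv))
      exact ⟨a', ha'.symm⟩
    · exact ⟨v, hfbig v hv⟩
  refine ⟨Equiv.ofBijective f ⟨hfinj, hfsurj⟩, ?_, ?_, ?_⟩
  · apply Set.Finite.subset (Set.finite_Iic M)
    intro x hx
    simp only [Set.mem_setOf_eq] at hx
    by_contra h
    simp only [Set.mem_Iic, not_le] at h
    exact hx (hfbig x h)
  · show f 0 = 0
    have h0 : normal c 0 = 0 := normal_zero c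
    have ha0 : a 0 = 0 := by rw [← han 0, normal_zero]
    have hc0 : c 0 = 0 := by show a (τ 0) = 0; rw [hτ0, ha0]
    calc f 0 = f (normal c 0) := by rw [h0]
      _ = c 0 := hfnorm 0
      _ = 0 := hc0
  · intro k
    show f (normal c k) = a (τ k)
    exact hfnorm k

/-! ### measurability helpers -/

lemma meas_of_countable {α β : Type*} [MeasurableSpace α] [MeasurableSpace β]
    [Countable α] [MeasurableSingletonClass α] (f : α → β) : Measurable f :=
  fun _ _ => (Set.to_countable _).measurableSet

lemma normal_congr_restrict {c c' : ℕ → ℕ} {k : ℕ} (h : ∀ j ≤ k, c j = c' j) :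
    normal c k = normal c' k := by
  have hfo : firstOcc c k = firstOcc c' k := by
    apply le_antisymm
    · apply Nat.find_le
      show c (firstOcc c' k) = c k
      rw [h _ ((firstOcc_le c' k)), h _ le_rfl]
      exact firstOcc_app c' k
    · apply Nat.find_le
      show c' (firstOcc c k) = c' k
      rw [← h _ ((firstOcc_le c k)), ← h _ le_rfl]
      exact firstOcc_app c k
  rw [normal, normal, hfo]
  congr 1
  apply Finset.image_congr
  intro j hj
  rw [Finset.coe_range, Set.mem_Iio] at hj
  exact h j (le_trans (Nat.le_of_lt_succ (Nat.lt_succ_of_lt hj)) (firstOcc_le c' k))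

lemma measurable_normal_apply (k : ℕ) : Measurable (fun c : ℕ → ℕ => normal c k) := by
  have hfactor : (fun c : ℕ → ℕ => normal c k) =
      (fun v : Fin (k+1) → ℕ => normal (fun j => if h : j < k+1 then v ⟨j, h⟩ else 0) k)
        ∘ (fun c (j : Fin (k+1)) => c j.val) := by
    funext c
    exact (normal_congr_restrict fun j hj => by
      simp only [Function.comp]
      rw [dif_pos (Nat.lt_succ_of_le hj)]).symm
  rw [hfactor]
  exact (meas_of_countable _).comp (measurable_pi_lambda _ fun j => measurable_pi_apply j.val)

lemma measurable_eval_pair : Measurable (fun q : ℕ × (ℕ → ℝ) => q.2 q.1) := by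
  intro s hs
  have hset : (fun q : ℕ × (ℕ → ℝ) => q.2 q.1) ⁻¹' s
      = ⋃ n, (({n} : Set ℕ) ×ˢ ((fun u : ℕ → ℝ => u n) ⁻¹' s)) := by
    ext ⟨n, u⟩
    simp only [Set.mem_preimage, Set.mem_iUnion, Set.mem_prod, Set.mem_singleton_iff]
    constructor
    · intro h; exact ⟨n, rfl, h⟩
    · rintro ⟨m, rfl, h⟩; exact h
  rw [hset]
  exact MeasurableSet.iUnion fun n =>
    (MeasurableSet.singleton n).prod ((measurable_pi_apply n) hs)

/-- Let `(U_i)_{i≥1}` be an exchangeable sequence of `[0,1]`-valued random variables,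
`U₀ := 0`, and `Π` an exchangeable random distinguished partition of ℤ₊ (encoded by
its random index map `A ω = α_{Π(ω)}`) independent of `(U_i)_{i≥1}`.  Exchangeability
of `Π` means: for every finitely supported permutation `σ` of ℤ₊ with `σ(0) = 0`, the
partition `σΠ` (the distinguished partition whose index map `A'` satisfies
`A' i = A' j ↔ A (σ i) = A (σ j)`, i.e. `i,j` are in the same block of `σΠ` iff
`σ(i),σ(j)` are in the same block of `Π`) has the same law as `Π`.
Then the sequence `(U_{α_Π(k)})_{k≥1}` is exchangeable: for every finitely supported
permutation `τ` of `{1,2,…}`, `(U_{α_Π(τ(k))})_{k≥1}` has the same law as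
`(U_{α_Π(k)})_{k≥1}`. -/
theorem sequence_blockIndex_exchangeable
    {Ω : Type*} [MeasurableSpace Ω] (P : Measure Ω) [IsProbabilityMeasure P]
    (U : ℕ → Ω → ℝ) (hUmeas : ∀ i, Measurable (U i))
    (hUrange : ∀ i ω, U i ω ∈ Set.Icc (0 : ℝ) 1)
    (hU0 : ∀ ω, U 0 ω = 0)
    (hUexch : ∀ τ : Equiv.Perm ℕ, {x | τ x ≠ x}.Finite → τ 0 = 0 →
      Measure.map (fun ω (i : ℕ) => U (τ i) ω) P = Measure.map (fun ω (i : ℕ) => U i ω) P)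
    (A : Ω → ℕ → ℕ) (hAmeas : Measurable A)
    (hA : ∀ ω, IsDistIndexMap (A ω))
    (hindep : ProbabilityTheory.IndepFun A (fun ω (i : ℕ) => U i ω) P)
    (hAexch : ∀ σ : Equiv.Perm ℕ, {x | σ x ≠ x}.Finite → σ 0 = 0 →
      ∀ A' : Ω → ℕ → ℕ,
        (∀ ω, IsDistIndexMap (A' ω) ∧
          ∀ i j, (A' ω i = A' ω j ↔ A ω (σ i) = A ω (σ j))) →
        Measure.map A' P = Measure.map A P)
    (τ : Equiv.Perm ℕ) (hτfin : {x | τ x ≠ x}.Finite) (hτ0 : τ 0 = 0) :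
    Measure.map (fun ω (k : ℕ) => U (A ω (τ k)) ω) P
      = Measure.map (fun ω (k : ℕ) => U (A ω k) ω) P := by
  classical
  have hUseqm : Measurable (fun ω (i : ℕ) => U i ω) :=
    measurable_pi_lambda _ fun i => hUmeas i
  set μ : Measure (ℕ → ℕ) := Measure.map A P with hμ
  set ν : Measure (ℕ → ℝ) := Measure.map (fun ω (i : ℕ) => U i ω) P with hν
  haveI : IsProbabilityMeasure μ := Measure.isProbabilityMeasure_map hAmeas.aemeasurable
  haveI : IsProbabilityMeasure ν := Measure.isProbabilityMeasure_map hUseqm.aemeasurable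
  have hjoint : Measure.map (fun ω => (A ω, fun i : ℕ => U i ω)) P = μ.prod ν :=
    (ProbabilityTheory.indepFun_iff_map_prod_eq_prod_map_map hAmeas.aemeasurable
      hUseqm.aemeasurable).1 hindep
  -- the relevant maps on the product space
  set Φ : (ℕ → ℕ) × (ℕ → ℝ) → (ℕ → ℝ) := fun p k => p.2 (p.1 k) with hΦ
  set Φτ : (ℕ → ℕ) × (ℕ → ℝ) → (ℕ → ℝ) := fun p k => p.2 (p.1 (τ k)) with hΦτ
  set Nm : (ℕ → ℕ) → (ℕ → ℕ) := fun a k => normal (fun j => a (τ j)) k with hNm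
  set Ψ : (ℕ → ℕ) × (ℕ → ℝ) → (ℕ → ℝ) := fun p k => p.2 (Nm p.1 k) with hΨ
  have hkey : ∀ m : ℕ, Measurable (fun p : (ℕ → ℕ) × (ℕ → ℝ) => p.2 (p.1 m)) := by
    intro m
    have h1 : Measurable (fun p : (ℕ → ℕ) × (ℕ → ℝ) => ((p.1 m, p.2) : ℕ × (ℕ → ℝ))) :=
      ((measurable_pi_apply m).comp measurable_fst).prodMk measurable_snd
    exact measurable_eval_pair.comp h1
  have hΦm : Measurable Φ := measurable_pi_lambda _ fun k => hkey k
  have hΦτm : Measurable Φτ := measurable_pi_lambda _ fun k => hkey (τ k)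
  have hNmm : Measurable Nm :=
    measurable_pi_lambda _ fun k =>
      (measurable_normal_apply k).comp
        (measurable_pi_lambda _ fun j => measurable_pi_apply (τ j))
  have hΨm : Measurable Ψ := by
    apply measurable_pi_lambda
    intro k
    have h1 : Measurable (fun p : (ℕ → ℕ) × (ℕ → ℝ) => ((Nm p.1 k, p.2) : ℕ × (ℕ → ℝ))) :=
      (((measurable_pi_apply k).comp hNmm).comp measurable_fst).prodMk measurable_snd
    exact measurable_eval_pair.comp h1
  -- rewrite both sides through the joint law
  have hLHS : Measure.map (fun ω (k : ℕ) => U (A ω (τ k)) ω) P = Measure.map Φτ (μ.prod ν) := by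
    rw [← hjoint, Measure.map_map hΦτm (hAmeas.prodMk hUseqm)]
    rfl
  have hRHS : Measure.map (fun ω (k : ℕ) => U (A ω k) ω) P = Measure.map Φ (μ.prod ν) := by
    rw [← hjoint, Measure.map_map hΦm (hAmeas.prodMk hUseqm)]
    rfl
  -- invariance of ν under finitely supported permutations fixing 0
  have hνinv : ∀ ρ : Equiv.Perm ℕ, {x | ρ x ≠ x}.Finite → ρ 0 = 0 →
      Measure.map (fun u : ℕ → ℝ => fun i => u (ρ i)) ν = ν := by
    intro ρ h1 h2
    have hm : Measurable (fun u : ℕ → ℝ => fun i => u (ρ i)) :=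
      measurable_pi_lambda _ fun i => measurable_pi_apply (ρ i)
    rw [hν, Measure.map_map hm hUseqm]
    exact hUexch ρ h1 h2
  -- μ-a.e. a is normalized
  have hae : ∀ᵐ a ∂μ, ∀ k, normal a k = a k := by
    have hms : MeasurableSet {a : ℕ → ℕ | ∀ k, normal a k = a k} := by
      have : {a : ℕ → ℕ | ∀ k, normal a k = a k}
          = ⋂ k, (fun a : ℕ → ℕ => (normal a k, a k)) ⁻¹' {p : ℕ × ℕ | p.1 = p.2} := by
        ext a; simp [Set.mem_iInter, Set.mem_preimage]
      rw [this]
      exact MeasurableSet.iInter fun k =>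
        ((measurable_normal_apply k).prodMk (measurable_pi_apply k))
          ((Set.to_countable _).measurableSet)
    rw [ae_iff]
    have hcompl : {a : ℕ → ℕ | ¬ ∀ k, normal a k = a k}
        = {a : ℕ → ℕ | ∀ k, normal a k = a k}ᶜ := rfl
    rw [hcompl, hμ, Measure.map_apply hAmeas hms.compl]
    have : A ⁻¹' {a : ℕ → ℕ | ∀ k, normal a k = a k}ᶜ = ∅ := by
      ext ω
      simp only [Set.mem_preimage, Set.mem_compl_iff, Set.mem_setOf_eq, Set.mem_empty_iff_false,
        iff_false, not_not]
      exact isDistIndexMap_normal (hA ω)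
    rw [this]
    exact measure_empty
  -- Step 1 : map Φτ (μ.prod ν) = map Ψ (μ.prod ν)
  have hstep1 : Measure.map Φτ (μ.prod ν) = Measure.map Ψ (μ.prod ν) := by
    apply Measure.ext
    intro s hs
    rw [Measure.map_apply hΦτm hs, Measure.map_apply hΨm hs,
      Measure.prod_apply (hΦτm hs), Measure.prod_apply (hΨm hs)]
    apply lintegral_congr_ae
    filter_upwards [hae] with a ha
    obtain ⟨ρ, hρfin, hρ0, hρ⟩ := exists_perm_normal_comp ha τ hτfin hτ0
    have hmρ : Measurable (fun u : ℕ → ℝ => fun i => u (ρ i)) :=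
      measurable_pi_lambda _ fun i => measurable_pi_apply (ρ i)
    have hset : Prod.mk a ⁻¹' (Φτ ⁻¹' s)
        = (fun u : ℕ → ℝ => fun i => u (ρ i)) ⁻¹' (Prod.mk a ⁻¹' (Ψ ⁻¹' s)) := by
      ext u
      simp only [Set.mem_preimage]
      have heq : Φτ (a, u) = Ψ (a, fun i => u (ρ i)) := by
        funext k
        show u (a (τ k)) = u (ρ (Nm a k))
        rw [hρ k]
      rw [heq]
    rw [hset, ← Measure.map_apply hmρ (measurable_prodMk_left (hΨm hs)),
      hνinv ρ hρfin hρ0]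
  -- Step 2 : map Ψ (μ.prod ν) = map Φ (μ.prod ν)
  have hmapN : Measure.map Nm μ = μ := by
    rw [hμ, Measure.map_map hNmm hAmeas]
    exact hAexch τ hτfin hτ0 (fun ω => Nm (A ω)) (fun ω =>
      ⟨normal_isDistIndexMap (fun j => A ω (τ j)),
        fun i j => normal_eq_iff (fun j => A ω (τ j)) i j⟩)
  have hstep2 : Measure.map Ψ (μ.prod ν) = Measure.map Φ (μ.prod ν) := by
    have hψcomp : Ψ = Φ ∘ (Prod.map Nm id) := rfl
    rw [hψcomp, ← Measure.map_map hΦm (hNmm.prodMap measurable_id)]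
    congr 1
    rw [← Measure.map_prod_map _ _ hNmm measurable_id, Measure.map_id, hmapN]
  rw [hLHS, hRHS, hstep1, hstep2]
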